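/- Let $\Lambda \in \mathbb{S}^n_{++}$ and $D \in \mathbb{R}^{n\times n}$ with $\Lambda D$ symmetric positive semidefinite. Then $\|D\Lambda^{-1}\| \le \|\Lambda^{-1}\|$ in the spectral norm. -/

import Mathlib

open scoped RealInnerProductSpace

/-- Cauchy–Schwarz for the positive semidefinite bilinear form `⟪u, M v⟫`. -/
lemma psd_cauchy_schwarz {n : ℕ}
    (M : EuclideanSpace ℝ (Fin n) →L[ℝ] EuclideanSpace ℝ (Fin n))
    (hsM : ∀ u v, ⟪M u, v⟫ = ⟪u, M v⟫)
    (hpsd : ∀ u, 0 ≤ ⟪u, M u⟫) (u v : EuclideanSpace ℝ (Fin n)) :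
    ⟪u, M v⟫ ^ 2 ≤ ⟪u, M u⟫ * ⟪v, M v⟫ := by
  have key : ∀ t : ℝ, 0 ≤ ⟪v, M v⟫ * (t * t) + (2 * ⟪u, M v⟫) * t + ⟪u, M u⟫ := by
    intro t
    have h := hpsd (u + t • v)
    have hexp : ⟪u + t • v, M (u + t • v)⟫
        = ⟪v, M v⟫ * (t * t) + (2 * ⟪u, M v⟫) * t + ⟪u, M u⟫ := by
      have hvu : ⟪v, M u⟫ = ⟪u, M v⟫ := by
        rw [real_inner_comm, hsM]
      simp only [map_add, map_smul, inner_add_left, inner_add_right,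
        real_inner_smul_left, real_inner_smul_right, hvu]
      ring
    linarith [hexp ▸ h]
  have hd : discrim ⟪v, M v⟫ (2 * ⟪u, M v⟫) ⟪u, M u⟫ ≤ 0 := discrim_le_zero key
  rw [discrim] at hd
  nlinarith [hd]

theorem stmt15 (n : ℕ)
    (Λ D Λinv : EuclideanSpace ℝ (Fin n) →L[ℝ] EuclideanSpace ℝ (Fin n))
    (hsymm : ∀ u v, ⟪Λ u, v⟫ = ⟪u, Λ v⟫)
    (hpos : ∀ u, u ≠ 0 → 0 < ⟪u, Λ u⟫)
    (hinv : ∀ u, Λ (Λinv u) = u ∧ Λinv (Λ u) = u)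
    (hΛDsymm : ∀ u v, ⟪Λ (D u), v⟫ = ⟪u, Λ (D v)⟫)
    (hΛDpsd : ∀ u, 0 ≤ ⟪u, Λ (D u)⟫)
    (hΛIDsymm : ∀ u v, ⟪Λ (u - D u), v⟫ = ⟪u, Λ (v - D v)⟫)
    (hΛIDpsd : ∀ u, 0 ≤ ⟪u, Λ (u - D u)⟫) :
    ‖D.comp Λinv‖ ≤ ‖Λinv‖ := by
  set M := D.comp Λinv with hM
  have hMapp : ∀ u, M u = D (Λinv u) := fun u => rfl
  -- symmetry of M
  have hsM : ∀ u v, ⟪M u, v⟫ = ⟪u, M v⟫ := by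
    intro u v
    calc ⟪M u, v⟫ = ⟪D (Λinv u), Λ (Λinv v)⟫ := by rw [hMapp, (hinv v).1]
      _ = ⟪Λ (D (Λinv u)), Λinv v⟫ := (hsymm _ _).symm
      _ = ⟪Λinv u, Λ (D (Λinv v))⟫ := hΛDsymm _ _
      _ = ⟪Λ (Λinv u), D (Λinv v)⟫ := (hsymm _ _).symm
      _ = ⟪u, M v⟫ := by rw [(hinv u).1, hMapp]
  -- positivity of M
  have hpsdM : ∀ u, 0 ≤ ⟪u, M u⟫ := by
    intro u
    have : ⟪u, M u⟫ = ⟪Λinv u, Λ (D (Λinv u))⟫ := by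
      calc ⟪u, M u⟫ = ⟪Λ (Λinv u), D (Λinv u)⟫ := by rw [hMapp, (hinv u).1]
        _ = ⟪Λinv u, Λ (D (Λinv u))⟫ := hsymm _ _
    rw [this]; exact hΛDpsd _
  -- quadratic form of M dominated by that of Λinv
  have hle : ∀ u, ⟪u, M u⟫ ≤ ⟪u, Λinv u⟫ := by
    intro u
    have key : 0 ≤ ⟪u, Λinv u⟫ - ⟪u, M u⟫ := by
      have : ⟪u, Λinv u⟫ - ⟪u, M u⟫ = ⟪Λinv u, Λ (Λinv u - D (Λinv u))⟫ := by
        calc ⟪u, Λinv u⟫ - ⟪u, M u⟫ = ⟪u, Λinv u - D (Λinv u)⟫ := by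
              rw [hMapp, inner_sub_right]
          _ = ⟪Λ (Λinv u), Λinv u - D (Λinv u)⟫ := by rw [(hinv u).1]
          _ = ⟪Λinv u, Λ (Λinv u - D (Λinv u))⟫ := hsymm _ _
      rw [this]; exact hΛIDpsd _
    linarith
  -- pointwise bound for ‖M u‖²
  have hbound : ∀ u, ‖M u‖ ^ 2 ≤ (‖Λinv‖ * ‖M‖) * ‖u‖ ^ 2 := by
    intro u
    have e1 : ⟪u, M (M u)⟫ = ‖M u‖ ^ 2 := by
      rw [← hsM, real_inner_self_eq_norm_sq]
    have cs := psd_cauchy_schwarz M hsM hpsdM u (M u)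
    rw [e1] at cs
    have h1 : ⟪u, M u⟫ ≤ ‖Λinv‖ * ‖u‖ ^ 2 := by
      calc ⟪u, M u⟫ ≤ ⟪u, Λinv u⟫ := hle u
        _ ≤ ‖u‖ * ‖Λinv u‖ := real_inner_le_norm _ _
        _ ≤ ‖u‖ * (‖Λinv‖ * ‖u‖) := by
            exact mul_le_mul_of_nonneg_left (Λinv.le_opNorm u) (norm_nonneg u)
        _ = ‖Λinv‖ * ‖u‖ ^ 2 := by ring
    have h2 : ⟪M u, M (M u)⟫ ≤ ‖M‖ * ‖M u‖ ^ 2 := by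
      calc ⟪M u, M (M u)⟫ ≤ ‖M u‖ * ‖M (M u)‖ := real_inner_le_norm _ _
        _ ≤ ‖M u‖ * (‖M‖ * ‖M u‖) := by
            exact mul_le_mul_of_nonneg_left (M.le_opNorm (M u)) (norm_nonneg _)
        _ = ‖M‖ * ‖M u‖ ^ 2 := by ring
    have h3 : (‖M u‖ ^ 2) ^ 2 ≤ (‖Λinv‖ * ‖u‖ ^ 2) * (‖M‖ * ‖M u‖ ^ 2) := by
      calc (‖M u‖ ^ 2) ^ 2 ≤ ⟪u, M u⟫ * ⟪M u, M (M u)⟫ := cs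
        _ ≤ (‖Λinv‖ * ‖u‖ ^ 2) * (‖M‖ * ‖M u‖ ^ 2) := by
            apply mul_le_mul h1 h2 (hpsdM _) (by positivity)
    rcases eq_or_lt_of_le (sq_nonneg ‖M u‖) with h0 | h0
    · rw [← h0]; positivity
    · have := (mul_le_mul_iff_of_pos_right h0).mp (by nlinarith [h3] :
        (‖M u‖ ^ 2) * ‖M u‖ ^ 2 ≤ ((‖Λinv‖ * ‖M‖) * ‖u‖ ^ 2) * ‖M u‖ ^ 2)
      exact this
  -- conclude
  have hMle : ‖M‖ ≤ Real.sqrt (‖Λinv‖ * ‖M‖) := by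
    apply M.opNorm_le_bound (Real.sqrt_nonneg _)
    intro u
    have h := hbound u
    have : ‖M u‖ ≤ Real.sqrt ((‖Λinv‖ * ‖M‖) * ‖u‖ ^ 2) := by
      rw [← Real.sqrt_sq (norm_nonneg (M u))]
      exact Real.sqrt_le_sqrt h
    calc ‖M u‖ ≤ Real.sqrt ((‖Λinv‖ * ‖M‖) * ‖u‖ ^ 2) := this
      _ = Real.sqrt (‖Λinv‖ * ‖M‖) * ‖u‖ := by
          rw [Real.sqrt_mul (by positivity), Real.sqrt_sq (norm_nonneg u)]
  have hsq : ‖M‖ * ‖M‖ ≤ ‖Λinv‖ * ‖M‖ := by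
    have h1 : ‖M‖ * ‖M‖ ≤ Real.sqrt (‖Λinv‖ * ‖M‖) * Real.sqrt (‖Λinv‖ * ‖M‖) :=
      mul_le_mul hMle hMle (norm_nonneg _) (Real.sqrt_nonneg _)
    rwa [Real.mul_self_sqrt (by positivity)] at h1
  rcases eq_or_lt_of_le (norm_nonneg M) with h0 | h0
  · rw [← h0]; exact norm_nonneg _
  · exact le_of_mul_le_mul_right hsq h0
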